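/- If $b^3 = (ab)^3 = (ab^{-1})^3 = 1$ in a group, then $[a^b, a] = 1$, i.e., $a$ commutes with its conjugate $bab^{-1}$. -/

import Mathlib

open scoped commutatorElement

/-- If `b³ = (ab)³ = (ab⁻¹)³ = 1` in a group, then `[a^b, a] = 1`,
i.e. `a` commutes with its conjugate `b a b⁻¹`. -/
theorem stmt_1 {G : Type*} [Group G] (a b : G)
    (h1 : b ^ 3 = 1) (h2 : (a * b) ^ 3 = 1) (h3 : (a * b⁻¹) ^ 3 = 1) :
    ⁅b * a * b⁻¹, a⁆ = 1 := by
  rw [commutatorElement_eq_one_iff_commute]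
  have hb2 : b * b = b⁻¹ := by
    have h := h1
    rw [pow_succ, pow_succ, pow_one] at h
    exact eq_inv_of_mul_eq_one_left h
  have h2' : a * b * (a * b) = b⁻¹ * a⁻¹ := by
    have h := h2
    rw [pow_succ, pow_succ, pow_one] at h
    rw [← mul_inv_rev]
    exact eq_inv_of_mul_eq_one_left h
  have h3' : a * b⁻¹ * (a * b⁻¹) = b * a⁻¹ := by
    have h := h3
    rw [pow_succ, pow_succ, pow_one] at h
    have := eq_inv_of_mul_eq_one_left h
    rwa [mul_inv_rev, inv_inv] at this
  have key1 : b * a * b⁻¹ * a = b⁻¹ * a⁻¹ * b := by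
    calc b * a * b⁻¹ * a = b * (a * b⁻¹ * (a * b⁻¹)) * b := by group
    _ = b * (b * a⁻¹) * b := by rw [h3']
    _ = b * b * a⁻¹ * b := by group
    _ = b⁻¹ * a⁻¹ * b := by rw [hb2]
  have key2 : a * (b * a * b⁻¹) = b⁻¹ * a⁻¹ * b := by
    calc a * (b * a * b⁻¹) = a * b * (a * b) * b⁻¹ * b⁻¹ := by group
    _ = b⁻¹ * a⁻¹ * b⁻¹ * b⁻¹ := by rw [h2']
    _ = b⁻¹ * a⁻¹ * (b * b)⁻¹ := by group
    _ = b⁻¹ * a⁻¹ * b⁻¹⁻¹ := by rw [hb2]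
    _ = b⁻¹ * a⁻¹ * b := by group
  exact (key1.trans key2.symm)
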